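/- Let λ₁, λ₂ > 0, T > 0, and let Π : ℕ × ℕ → ℝ be a bounded payoff function, and define the value function X(t, n₁, n₂) = Σ_{k₁=0}^∞ Σ_{k₂=0}^∞ Π(n₁+k₁, n₂+k₂) · P(k₁, λ₁(T−t)) · P(k₂, λ₂(T−t)) where P(k, Λ) = e^{−Λ} Λ^k / k!. If at some time t ∈ [0, T] and scores (n₁, n₂) the value is Delta-neutral, i.e. X(t, n₁+1, n₂) = X(t, n₁, n₂) and X(t, n₁, n₂+1) = X(t, n₁, n₂), then it is also Theta-neutral at that point, i.e. the time derivative ∂_t X(t, n₁, n₂) equals 0. -/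

import Mathlib

/-- The Poisson probability mass function `P(k, Λ) = e^{−Λ} Λ^k / k!`. -/
noncomputable def poissonP (Λ : ℝ) (k : ℕ) : ℝ :=
  Real.exp (-Λ) * Λ ^ k / (Nat.factorial k)

/-- The value of a European bet with payoff `pay` at time `t` with current scores
`(n₁, n₂)`, in the Poisson model with intensities `lam₁, lam₂` and terminal time `T`. -/
noncomputable def betValue (lam₁ lam₂ T : ℝ) (pay : ℕ × ℕ → ℝ)
    (t : ℝ) (n₁ n₂ : ℕ) : ℝ :=
  ∑' k₁ : ℕ, ∑' k₂ : ℕ,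
    pay (n₁ + k₁, n₂ + k₂) * poissonP (lam₁ * (T - t)) k₁ * poissonP (lam₂ * (T - t)) k₂

/-- `poissonP` with index shifted down by one (zero for `k = 0`). -/
noncomputable def poissonPm (Λ : ℝ) : ℕ → ℝ
  | 0 => 0
  | (k + 1) => poissonP Λ k

lemma hasDerivAt_poissonP (Λ : ℝ) (k : ℕ) :
    HasDerivAt (fun x => poissonP x k) (poissonPm Λ k - poissonP Λ k) Λ := by
  have hexp : HasDerivAt (fun x : ℝ => Real.exp (-x)) (-Real.exp (-Λ)) Λ := by
    simpa [Function.comp_def] using ((Real.hasDerivAt_exp (-Λ)).comp Λ ((hasDerivAt_id Λ).neg))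
  cases k with
  | zero =>
    have := hexp.div_const ((Nat.factorial 0 : ℕ) : ℝ)
    have h2 : HasDerivAt (fun x : ℝ => poissonP x 0) (-Real.exp (-Λ) / 1) Λ := by
      simpa [poissonP] using this
    convert h2 using 1
    simp [poissonPm, poissonP]
  | succ k =>
    have hpow : HasDerivAt (fun x : ℝ => x ^ (k + 1)) (((k : ℝ) + 1) * Λ ^ k) Λ := by
      simpa using hasDerivAt_pow (k + 1) Λ
    have := (hexp.mul hpow).div_const ((Nat.factorial (k + 1) : ℕ) : ℝ)
    refine HasDerivAt.congr_deriv this ?_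
    have hfac : ((Nat.factorial (k + 1) : ℕ) : ℝ) = ((k : ℝ) + 1) * (Nat.factorial k : ℝ) := by
      push_cast [Nat.factorial_succ]; ring
    have hk : (Nat.factorial k : ℝ) ≠ 0 := by positivity
    have hk1 : ((k : ℝ) + 1) ≠ 0 := by positivity
    simp only [poissonPm, poissonP, hfac]
    field_simp
    ring

lemma hasDerivAt_poissonP_time (lam T : ℝ) (k : ℕ) (s : ℝ) :
    HasDerivAt (fun x => poissonP (lam * (T - x)) k)
      (lam * (poissonP (lam * (T - s)) k - poissonPm (lam * (T - s)) k)) s := by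
  have hΛ : HasDerivAt (fun x : ℝ => lam * (T - x)) (-lam) s := by
    simpa using ((hasDerivAt_id s).const_sub T).const_mul lam
  have := (hasDerivAt_poissonP (lam * (T - s)) k).comp s hΛ
  refine HasDerivAt.congr_deriv this ?_
  ring

/-- Dominating sequence. -/
noncomputable def wB (M : ℝ) (k : ℕ) : ℝ := ((k : ℝ) + 1) * M ^ k / (Nat.factorial k)

lemma wB_nonneg {M : ℝ} (hM : 0 ≤ M) (k : ℕ) : 0 ≤ wB M k := by
  unfold wB; positivity

lemma summable_wB {M : ℝ} (hM : 0 ≤ M) : Summable (wB M) := by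
  refine Summable.of_nonneg_of_le (wB_nonneg hM) (fun k => ?_)
    (Real.summable_pow_div_factorial (2 * M))
  unfold wB
  rw [div_le_div_iff_of_pos_right (by positivity)]
  have h1 : ((k : ℝ) + 1) ≤ 2 ^ k := by
    exact_mod_cast Nat.succ_le_of_lt (Nat.lt_two_pow_self)
  calc ((k : ℝ) + 1) * M ^ k ≤ 2 ^ k * M ^ k := by
        apply mul_le_mul_of_nonneg_right h1 (by positivity)
    _ = (2 * M) ^ k := by rw [mul_pow]

lemma abs_poissonP_le {Λ M : ℝ} (h : |Λ| ≤ M) (k : ℕ) :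
    |poissonP Λ k| ≤ Real.exp M * (M ^ k / (Nat.factorial k)) := by
  have hM0 : 0 ≤ M := le_trans (abs_nonneg _) h
  have h1 : Real.exp (-Λ) ≤ Real.exp M := Real.exp_le_exp.2 (by linarith [neg_abs_le Λ])
  have h2 : |Λ| ^ k ≤ M ^ k := pow_le_pow_left₀ (abs_nonneg _) h k
  unfold poissonP
  rw [abs_div, abs_mul, abs_of_nonneg (Real.exp_pos _).le, abs_pow, Nat.abs_cast,
    ← mul_div_assoc]
  exact div_le_div₀ (by positivity)
    (mul_le_mul h1 h2 (by positivity) (Real.exp_pos _).le) (by positivity) le_rfl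

lemma abs_poissonP_le_wB {Λ M : ℝ} (h : |Λ| ≤ M) (k : ℕ) :
    |poissonP Λ k| ≤ Real.exp M * wB M k := by
  have hM0 : 0 ≤ M := le_trans (abs_nonneg _) h
  refine le_trans (abs_poissonP_le h k) ?_
  unfold wB
  apply mul_le_mul_of_nonneg_left ?_ (Real.exp_pos M).le
  exact div_le_div₀ (by positivity) (by nlinarith [pow_nonneg hM0 k]) (by positivity) le_rfl

lemma abs_poissonPm_le_wB {Λ M : ℝ} (h : |Λ| ≤ M) (hM : 1 ≤ M) (k : ℕ) :
    |poissonPm Λ k| ≤ Real.exp M * wB M k := by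
  have hM0 : 0 ≤ M := by linarith
  cases k with
  | zero =>
    simp only [poissonPm, abs_zero, wB]
    positivity
  | succ k =>
    refine le_trans (abs_poissonP_le h k) ?_
    unfold wB
    apply mul_le_mul_of_nonneg_left ?_ (Real.exp_pos M).le
    have hfac : ((Nat.factorial (k + 1) : ℕ) : ℝ) = ((k : ℝ) + 1) * (Nat.factorial k : ℝ) := by
      push_cast [Nat.factorial_succ]; ring
    have hk : (0:ℝ) < (Nat.factorial k : ℝ) := by positivity
    rw [hfac, div_le_div_iff₀ hk (by positivity)]
    push_cast
    have hpow : M ^ k ≤ M ^ (k+1) := by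
      calc M ^ k = 1 * M ^ k := (one_mul _).symm
      _ ≤ M * M ^ k := by apply mul_le_mul_of_nonneg_right hM (by positivity)
      _ = M ^ (k+1) := by ring
    nlinarith [pow_nonneg hM0 k, pow_nonneg hM0 (k+1)]

lemma summable_of_abs_le_wB {N C : ℝ} (hN : 0 ≤ N) {f : ℕ × ℕ → ℝ}
    (h : ∀ p : ℕ × ℕ, |f p| ≤ C * (wB N p.1 * wB N p.2)) : Summable f := by
  refine Summable.of_norm_bounded
    (((summable_wB hN).mul_of_nonneg (summable_wB hN)
      (fun k => wB_nonneg hN k) (fun k => wB_nonneg hN k)).mul_left C) (fun p => ?_)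
  rw [Real.norm_eq_abs]; exact h p

lemma summable_payPP (pay : ℕ × ℕ → ℝ) {C : ℝ} (hC : ∀ p, |pay p| ≤ C)
    (n₁ n₂ : ℕ) (Λ₁ Λ₂ : ℝ) :
    Summable (fun p : ℕ × ℕ =>
      pay (n₁ + p.1, n₂ + p.2) * poissonP Λ₁ p.1 * poissonP Λ₂ p.2) := by
  have hC0 : 0 ≤ C := le_trans (abs_nonneg _) (hC (0, 0))
  set N : ℝ := max 1 (max |Λ₁| |Λ₂|) with hN
  have hN1 : 1 ≤ N := le_max_left _ _
  have hN0 : (0:ℝ) ≤ N := by linarith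
  have h₁ : |Λ₁| ≤ N := le_trans (le_max_left _ _) (le_max_right _ _)
  have h₂ : |Λ₂| ≤ N := le_trans (le_max_right _ _) (le_max_right _ _)
  have hE0 : (0:ℝ) < Real.exp N := Real.exp_pos _
  apply summable_of_abs_le_wB hN0 (C := C * (Real.exp N * Real.exp N))
  intro p
  have b1 := abs_poissonP_le_wB h₁ p.1
  have b2 := abs_poissonP_le_wB h₂ p.2
  have w1 := wB_nonneg hN0 p.1
  have w2 := wB_nonneg hN0 p.2
  rw [abs_mul, abs_mul]
  calc |pay (n₁ + p.1, n₂ + p.2)| * |poissonP Λ₁ p.1| * |poissonP Λ₂ p.2|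
      ≤ C * (Real.exp N * wB N p.1) * (Real.exp N * wB N p.2) := by
        refine mul_le_mul ?_ b2 (abs_nonneg _) (by positivity)
        exact mul_le_mul (hC _) b1 (abs_nonneg _) hC0
    _ = C * (Real.exp N * Real.exp N) * (wB N p.1 * wB N p.2) := by ring

lemma betValue_eq_tsum (lam₁ lam₂ T : ℝ) (pay : ℕ × ℕ → ℝ) {C : ℝ}
    (hC : ∀ p, |pay p| ≤ C) (s : ℝ) (n₁ n₂ : ℕ) :
    betValue lam₁ lam₂ T pay s n₁ n₂ = ∑' p : ℕ × ℕ,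
      pay (n₁ + p.1, n₂ + p.2) * poissonP (lam₁ * (T - s)) p.1 *
        poissonP (lam₂ * (T - s)) p.2 := by
  rw [betValue]
  exact (Summable.tsum_prod' (summable_payPP pay hC n₁ n₂ _ _)
    (summable_payPP pay hC n₁ n₂ _ _).prod_factor).symm

/-- A Delta-neutral European bet value (both forward differences vanish) is also
Theta-neutral (its time derivative vanishes). -/
theorem deltaNeutral_implies_thetaNeutral
    (lam₁ lam₂ T : ℝ) (hlam₁ : 0 < lam₁) (hlam₂ : 0 < lam₂) (hT : 0 < T)
    (pay : ℕ × ℕ → ℝ) (hpay : ∃ C : ℝ, ∀ p : ℕ × ℕ, |pay p| ≤ C)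
    (t : ℝ) (ht : t ∈ Set.Icc (0 : ℝ) T) (n₁ n₂ : ℕ)
    (hdelta₁ : betValue lam₁ lam₂ T pay t (n₁ + 1) n₂ = betValue lam₁ lam₂ T pay t n₁ n₂)
    (hdelta₂ : betValue lam₁ lam₂ T pay t n₁ (n₂ + 1) = betValue lam₁ lam₂ T pay t n₁ n₂) :
    deriv (fun s : ℝ => betValue lam₁ lam₂ T pay s n₁ n₂) t = 0 := by
  obtain ⟨C, hC⟩ := hpay
  have hC0 : 0 ≤ C := le_trans (abs_nonneg _) (hC (0, 0))
  set M : ℝ := (lam₁ + lam₂) * (T + 1) + 1 with hMdef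
  have hM1 : 1 ≤ M := by nlinarith
  have hM0 : (0:ℝ) ≤ M := by linarith
  set E : ℝ := Real.exp M with hEdef
  have hE0 : 0 < E := Real.exp_pos _
  set U : Set ℝ := Set.Ioo (-1 : ℝ) (T + 1) with hUdef
  have htU : t ∈ U := ⟨by linarith [ht.1], by linarith [ht.2]⟩
  -- the key bound on the intensity arguments on U
  have hΛbound : ∀ (lam : ℝ), 0 < lam → lam ≤ lam₁ + lam₂ → ∀ s ∈ U,
      |lam * (T - s)| ≤ M := by
    intro lam hl hls s hs
    rw [abs_mul, abs_of_pos hl]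
    have h1 : |T - s| ≤ T + 1 := by
      rw [abs_le]; constructor <;> [linarith [hs.2]; linarith [hs.1]]
    calc lam * |T - s| ≤ (lam₁ + lam₂) * (T + 1) := by
          apply mul_le_mul hls h1 (abs_nonneg _) (by linarith)
      _ ≤ M := by linarith
  have hΛ₁ : ∀ s ∈ U, |lam₁ * (T - s)| ≤ M :=
    hΛbound lam₁ hlam₁ (by linarith) 
  have hΛ₂ : ∀ s ∈ U, |lam₂ * (T - s)| ≤ M :=
    hΛbound lam₂ hlam₂ (by linarith)
  -- summability of dominating series
  have hw : Summable (wB M) := summable_wB hM0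
  have hwprod : ∀ K : ℝ, Summable (fun p : ℕ × ℕ => K * (wB M p.1 * wB M p.2)) := by
    intro K
    exact (hw.mul_of_nonneg hw (fun k => wB_nonneg hM0 k) (fun k => wB_nonneg hM0 k)).mul_left K
  -- generic summability criterion
  have hsummable : ∀ (f : ℕ × ℕ → ℝ) (K : ℝ),
      (∀ p, |f p| ≤ K * (wB M p.1 * wB M p.2)) → Summable f := by
    intro f K hb
    exact Summable.of_norm_bounded (hwprod K) (fun p => by
      rw [Real.norm_eq_abs]; exact hb p)
  -- the summands and their derivatives
  set g : ℕ × ℕ → ℝ → ℝ := fun p s =>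
    pay (n₁ + p.1, n₂ + p.2) * poissonP (lam₁ * (T - s)) p.1 * poissonP (lam₂ * (T - s)) p.2
    with hgdef
  set g' : ℕ × ℕ → ℝ → ℝ := fun p s =>
    pay (n₁ + p.1, n₂ + p.2) *
      ((lam₁ * (poissonP (lam₁ * (T - s)) p.1 - poissonPm (lam₁ * (T - s)) p.1)) *
        poissonP (lam₂ * (T - s)) p.2 +
       poissonP (lam₁ * (T - s)) p.1 *
        (lam₂ * (poissonP (lam₂ * (T - s)) p.2 - poissonPm (lam₂ * (T - s)) p.2)))
    with hg'def
  have hg : ∀ p : ℕ × ℕ, ∀ s : ℝ, HasDerivAt (g p) (g' p s) s := by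
    intro p s
    have h1 := (hasDerivAt_poissonP_time lam₁ T p.1 s).const_mul (pay (n₁ + p.1, n₂ + p.2))
    have h2 := hasDerivAt_poissonP_time lam₂ T p.2 s
    have := h1.mul h2
    refine HasDerivAt.congr_deriv this ?_
    ring
  -- bound on derivatives over U
  have hgbound : ∀ p : ℕ × ℕ, ∀ s ∈ U,
      ‖g' p s‖ ≤ (2 * C * (lam₁ + lam₂) * E * E) * (wB M p.1 * wB M p.2) := by
    intro p s hs
    have b1 := abs_poissonP_le_wB (hΛ₁ s hs) p.1
    have b2 := abs_poissonP_le_wB (hΛ₂ s hs) p.2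
    have b1m := abs_poissonPm_le_wB (hΛ₁ s hs) hM1 p.1
    have b2m := abs_poissonPm_le_wB (hΛ₂ s hs) hM1 p.2
    have hpabs := hC (n₁ + p.1, n₂ + p.2)
    have w1 := wB_nonneg hM0 p.1
    have w2 := wB_nonneg hM0 p.2
    rw [Real.norm_eq_abs, hg'def]
    calc |pay (n₁ + p.1, n₂ + p.2) *
        ((lam₁ * (poissonP (lam₁ * (T - s)) p.1 - poissonPm (lam₁ * (T - s)) p.1)) *
          poissonP (lam₂ * (T - s)) p.2 +
         poissonP (lam₁ * (T - s)) p.1 *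
          (lam₂ * (poissonP (lam₂ * (T - s)) p.2 - poissonPm (lam₂ * (T - s)) p.2)))|
        ≤ C * ((lam₁ * (E * wB M p.1 + E * wB M p.1)) * (E * wB M p.2) +
            (E * wB M p.1) * (lam₂ * (E * wB M p.2 + E * wB M p.2))) := by
          rw [abs_mul]
          apply mul_le_mul hpabs ?_ (abs_nonneg _) hC0
          refine le_trans (abs_add_le _ _) ?_
          have t1 : |(lam₁ * (poissonP (lam₁ * (T - s)) p.1 - poissonPm (lam₁ * (T - s)) p.1)) *
              poissonP (lam₂ * (T - s)) p.2| ≤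
              (lam₁ * (E * wB M p.1 + E * wB M p.1)) * (E * wB M p.2) := by
            rw [abs_mul, abs_mul, abs_of_pos hlam₁]
            refine mul_le_mul ?_ b2 (abs_nonneg _)
              (mul_nonneg hlam₁.le (by nlinarith))
            refine mul_le_mul_of_nonneg_left ?_ hlam₁.le
            exact le_trans (abs_sub _ _) (add_le_add b1 b1m)
          have t2 : |poissonP (lam₁ * (T - s)) p.1 *
              (lam₂ * (poissonP (lam₂ * (T - s)) p.2 - poissonPm (lam₂ * (T - s)) p.2))| ≤
              (E * wB M p.1) * (lam₂ * (E * wB M p.2 + E * wB M p.2)) := by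
            rw [abs_mul, abs_mul, abs_of_pos hlam₂]
            refine mul_le_mul b1 ?_ (by positivity) (mul_nonneg hE0.le w1)
            refine mul_le_mul_of_nonneg_left ?_ hlam₂.le
            exact le_trans (abs_sub _ _) (add_le_add b2 b2m)
          linarith
      _ ≤ (2 * C * (lam₁ + lam₂) * E * E) * (wB M p.1 * wB M p.2) := by nlinarith
  -- summability of g at t
  have hgsum : ∀ s ∈ U, Summable (fun p : ℕ × ℕ => g p s) := by
    intro s hs
    apply hsummable _ (C * E * E)
    intro p
    have b1 := abs_poissonP_le_wB (hΛ₁ s hs) p.1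
    have b2 := abs_poissonP_le_wB (hΛ₂ s hs) p.2
    have hpabs := hC (n₁ + p.1, n₂ + p.2)
    have w1 := wB_nonneg hM0 p.1
    have w2 := wB_nonneg hM0 p.2
    rw [hgdef]
    simp only [abs_mul]
    calc |pay (n₁ + p.1, n₂ + p.2)| * |poissonP (lam₁ * (T - s)) p.1| *
          |poissonP (lam₂ * (T - s)) p.2|
        ≤ C * (E * wB M p.1) * (E * wB M p.2) := by
          apply mul_le_mul _ b2 (abs_nonneg _) (by positivity)
          exact mul_le_mul hpabs b1 (abs_nonneg _) hC0
      _ = C * E * E * (wB M p.1 * wB M p.2) := by ring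
  -- the derivative of the series
  have hderiv : HasDerivAt (fun z : ℝ => ∑' p : ℕ × ℕ, g p z) (∑' p : ℕ × ℕ, g' p t) t :=
    hasDerivAt_tsum_of_isPreconnected (hwprod (2 * C * (lam₁ + lam₂) * E * E)) isOpen_Ioo
      isPreconnected_Ioo (fun p y _ => hg p y) hgbound htU (hgsum t htU) htU
  have heq : (fun s : ℝ => betValue lam₁ lam₂ T pay s n₁ n₂)
      = fun z : ℝ => ∑' p : ℕ × ℕ, g p z := by
    funext z
    exact betValue_eq_tsum lam₁ lam₂ T pay hC z n₁ n₂
  rw [heq, hderiv.deriv]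
  -- now compute the sum of the derivatives at `t`
  set Λ₁ : ℝ := lam₁ * (T - t) with hΛ₁def
  set Λ₂ : ℝ := lam₂ * (T - t) with hΛ₂def
  have hΛ₁t : |Λ₁| ≤ M := hΛ₁ t htU
  have hΛ₂t : |Λ₂| ≤ M := hΛ₂ t htU
  set f00 : ℕ × ℕ → ℝ := fun p =>
    pay (n₁ + p.1, n₂ + p.2) * poissonP Λ₁ p.1 * poissonP Λ₂ p.2 with hf00def
  set f10 : ℕ × ℕ → ℝ := fun p =>
    pay (n₁ + p.1, n₂ + p.2) * poissonPm Λ₁ p.1 * poissonP Λ₂ p.2 with hf10def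
  set f01 : ℕ × ℕ → ℝ := fun p =>
    pay (n₁ + p.1, n₂ + p.2) * poissonP Λ₁ p.1 * poissonPm Λ₂ p.2 with hf01def
  have hb3 : ∀ (q₁ q₂ : ℕ → ℝ), (∀ k, |q₁ k| ≤ E * wB M k) → (∀ k, |q₂ k| ≤ E * wB M k) →
      ∀ p : ℕ × ℕ, |pay (n₁ + p.1, n₂ + p.2) * q₁ p.1 * q₂ p.2|
        ≤ (C * E * E) * (wB M p.1 * wB M p.2) := by
    intro q₁ q₂ h₁ h₂ p
    have w1 := wB_nonneg hM0 p.1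
    have w2 := wB_nonneg hM0 p.2
    rw [abs_mul, abs_mul]
    calc |pay (n₁ + p.1, n₂ + p.2)| * |q₁ p.1| * |q₂ p.2|
        ≤ C * (E * wB M p.1) * (E * wB M p.2) := by
          refine mul_le_mul ?_ (h₂ p.2) (abs_nonneg _) (by positivity)
          exact mul_le_mul (hC _) (h₁ p.1) (abs_nonneg _) hC0
      _ = (C * E * E) * (wB M p.1 * wB M p.2) := by ring
  have hf00s : Summable f00 := hsummable _ _
    (hb3 _ _ (abs_poissonP_le_wB hΛ₁t) (abs_poissonP_le_wB hΛ₂t))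
  have hf10s : Summable f10 := hsummable _ _
    (hb3 _ _ (abs_poissonPm_le_wB hΛ₁t hM1) (abs_poissonP_le_wB hΛ₂t))
  have hf01s : Summable f01 := hsummable _ _
    (hb3 _ _ (abs_poissonP_le_wB hΛ₁t) (abs_poissonPm_le_wB hΛ₂t hM1))
  have hpt : ∀ p : ℕ × ℕ, g' p t = lam₁ * (f00 p - f10 p) + lam₂ * (f00 p - f01 p) := by
    intro p
    simp only [hg'def, hf00def, hf10def, hf01def, ← hΛ₁def, ← hΛ₂def]
    ring
  rw [tsum_congr hpt,
    Summable.tsum_add ((hf00s.sub hf10s).mul_left lam₁) ((hf00s.sub hf01s).mul_left lam₂),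
    tsum_mul_left, tsum_mul_left, Summable.tsum_sub hf00s hf10s, Summable.tsum_sub hf00s hf01s]
  -- identify the three sums with bet values
  have hS00 : ∑' p, f00 p = betValue lam₁ lam₂ T pay t n₁ n₂ :=
    (betValue_eq_tsum lam₁ lam₂ T pay hC t n₁ n₂).symm
  have hshift : ∀ (F : ℕ × ℕ → ℝ), (∀ p : ℕ × ℕ, p.1 = 0 → F p = 0) → Summable F →
      ∑' p : ℕ × ℕ, F (p.1 + 1, p.2) = ∑' p : ℕ × ℕ, F p := by
    intro F hF0 _
    have hinj : Function.Injective (fun p : ℕ × ℕ => (p.1 + 1, p.2)) := by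
      intro p q h
      simp only [Prod.mk.injEq] at h
      exact Prod.ext (by omega) h.2
    refine hinj.tsum_eq ?_
    intro x hx
    rcases x with ⟨x1, x2⟩
    by_contra hmem
    match x1, hx with
    | 0, hx => exact hx (hF0 (0, x2) rfl)
    | (k+1), hx => exact hmem ⟨(k, x2), rfl⟩
  have hS10 : ∑' p, f10 p = betValue lam₁ lam₂ T pay t (n₁ + 1) n₂ := by
    rw [← hshift f10 (fun p hp => by simp [hf10def, hp, poissonPm]) hf10s,
      betValue_eq_tsum lam₁ lam₂ T pay hC t (n₁ + 1) n₂]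
    apply tsum_congr
    intro p
    have : n₁ + (p.1 + 1) = n₁ + 1 + p.1 := by omega
    simp only [hf10def, poissonPm, this, ← hΛ₁def, ← hΛ₂def]
  have hS01 : ∑' p, f01 p = betValue lam₁ lam₂ T pay t n₁ (n₂ + 1) := by
    set F : ℕ × ℕ → ℝ := fun q : ℕ × ℕ =>
      pay (n₁ + q.2, n₂ + q.1) * poissonPm Λ₂ q.1 * poissonP Λ₁ q.2 with hFdef
    have hkey : ∑' p : ℕ × ℕ, f01 p = ∑' q : ℕ × ℕ, F q := by
      rw [← (Equiv.prodComm ℕ ℕ).tsum_eq F]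
      apply tsum_congr
      intro p
      simp only [hf01def, hFdef, Equiv.prodComm_apply, Prod.fst_swap, Prod.snd_swap]
      ring
    rw [hkey]
    have hsum2 : Summable F := by
      rw [hFdef]
      refine summable_of_abs_le_wB hM0 (C := C * E * E) (fun p => ?_)
      have w1 := wB_nonneg hM0 p.1
      have w2 := wB_nonneg hM0 p.2
      rw [abs_mul, abs_mul]
      calc |pay (n₁ + p.2, n₂ + p.1)| * |poissonPm Λ₂ p.1| * |poissonP Λ₁ p.2|
          ≤ C * (E * wB M p.1) * (E * wB M p.2) := by
            refine mul_le_mul ?_ (abs_poissonP_le_wB hΛ₁t p.2) (abs_nonneg _) (by positivity)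
            exact mul_le_mul (hC _) (abs_poissonPm_le_wB hΛ₂t hM1 p.1) (abs_nonneg _) hC0
        _ = C * E * E * (wB M p.1 * wB M p.2) := by ring
    rw [← hshift F (fun p hp => by simp [hFdef, hp, poissonPm]) hsum2,
      betValue_eq_tsum lam₁ lam₂ T pay hC t n₁ (n₂ + 1)]
    rw [← (Equiv.prodComm ℕ ℕ).tsum_eq (fun q : ℕ × ℕ =>
      pay (n₁ + q.1, n₂ + 1 + q.2) * poissonP Λ₁ q.1 * poissonP Λ₂ q.2)]
    apply tsum_congr
    intro p
    have h2 : n₂ + (p.1 + 1) = n₂ + 1 + p.1 := by omega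
    simp only [hFdef, poissonPm, h2, Equiv.prodComm_apply, Prod.fst_swap, Prod.snd_swap]
    ring
  rw [hS00, hS10, hS01, hdelta₁, hdelta₂, sub_self, mul_zero, mul_zero, add_zero]
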